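/- Let σ be a positive definite d×d Hermitian matrix with ‖σ⁻¹‖₂ = 1, and let Σ be a Hermitian d×d matrix with ‖Σ‖_op ≤ 1. Define f : U(d)×U(d) → ℝ by f(U,V) = Re tr(σ⁻¹ · UΣU† · VΣV†). Then for all unitary U, U', V: |f(U,V) − f(U',V)| ≤ 2‖U − U'‖₂, and consequently f is 4-Lipschitz with respect to the L₂-sum of Hilbert–Schmidt metrics on U(d)×U(d). -/

import Mathlib

open Matrix
open scoped ComplexOrder

/-- The Frobenius (Hilbert–Schmidt) norm of a complex matrix. -/
noncomputable def frobNorm {m n : Type*} [Fintype m] [Fintype n]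
    (A : Matrix m n ℂ) : ℝ :=
  Real.sqrt (∑ i, ∑ j, ‖A i j‖ ^ 2)

/-- The Euclidean (ℓ²) norm of a complex vector. -/
noncomputable def l2Norm {n : Type*} [Fintype n] (v : n → ℂ) : ℝ :=
  Real.sqrt (∑ i, ‖v i‖ ^ 2)

namespace TLipAux
variable {d : ℕ}

lemma dot_re (v : Fin d → ℂ) : (star v ⬝ᵥ v).re = ∑ i, ‖v i‖ ^ 2 := by
  simp [dotProduct, Complex.re_sum, Complex.sq_norm, Complex.normSq_apply]

lemma l2_sq (v : Fin d → ℂ) : l2Norm v ^ 2 = ∑ i, ‖v i‖ ^ 2 := by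
  rw [l2Norm, Real.sq_sqrt (by positivity)]

lemma l2_nonneg (v : Fin d → ℂ) : 0 ≤ l2Norm v := Real.sqrt_nonneg _

lemma frob_nonneg (A : Matrix (Fin d) (Fin d) ℂ) : 0 ≤ frobNorm A := Real.sqrt_nonneg _

lemma frob_sq (A : Matrix (Fin d) (Fin d) ℂ) :
    frobNorm A ^ 2 = ∑ i, ∑ j, ‖A i j‖ ^ 2 := by
  rw [frobNorm, Real.sq_sqrt (by positivity)]

lemma l2_mulVec_unitary {W : Matrix (Fin d) (Fin d) ℂ}
    (hW : W ∈ Matrix.unitaryGroup (Fin d) ℂ) (v : Fin d → ℂ) :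
    l2Norm (W *ᵥ v) = l2Norm v := by
  have h1 : star (W *ᵥ v) ⬝ᵥ (W *ᵥ v) = star v ⬝ᵥ v := by
    rw [star_mulVec, ← Matrix.dotProduct_mulVec, Matrix.mulVec_mulVec,
      ← Matrix.star_eq_conjTranspose, hW.1, Matrix.one_mulVec]
  rw [l2Norm, l2Norm, ← dot_re, ← dot_re, h1]

lemma frob_conjTranspose (A : Matrix (Fin d) (Fin d) ℂ) : frobNorm Aᴴ = frobNorm A := by
  rw [frobNorm, frobNorm, Finset.sum_comm]
  simp [conjTranspose_apply]

lemma frob_sq_cols (A : Matrix (Fin d) (Fin d) ℂ) :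
    frobNorm A ^ 2 = ∑ j, l2Norm (fun i => A i j) ^ 2 := by
  rw [frob_sq, Finset.sum_comm]
  exact Finset.sum_congr rfl fun j _ => (l2_sq _).symm

lemma col_mul (M N : Matrix (Fin d) (Fin d) ℂ) (j : Fin d) :
    (fun i => (M * N) i j) = M *ᵥ (fun i => N i j) := by
  funext i; simp [mul_apply, mulVec, dotProduct]

lemma frob_mul_le_left (M N : Matrix (Fin d) (Fin d) ℂ)
    (hM : ∀ v, l2Norm (M *ᵥ v) ≤ l2Norm v) : frobNorm (M * N) ≤ frobNorm N := by
  have h : frobNorm (M * N) ^ 2 ≤ frobNorm N ^ 2 := by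
    rw [frob_sq_cols, frob_sq_cols]
    refine Finset.sum_le_sum fun j _ => ?_
    rw [col_mul]
    exact pow_le_pow_left₀ (l2_nonneg _) (hM fun i => N i j) 2
  have h2 := Real.sqrt_le_sqrt h
  rwa [Real.sqrt_sq (frob_nonneg _), Real.sqrt_sq (frob_nonneg _)] at h2

lemma frob_mul_le_right (M N : Matrix (Fin d) (Fin d) ℂ)
    (hN : ∀ v, l2Norm (Nᴴ *ᵥ v) ≤ l2Norm v) : frobNorm (M * N) ≤ frobNorm M := by
  rw [← frob_conjTranspose (M * N), conjTranspose_mul, ← frob_conjTranspose M]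
  exact frob_mul_le_left _ _ hN

lemma abs_trace_re_le (M N : Matrix (Fin d) (Fin d) ℂ) :
    |((M * N).trace).re| ≤ frobNorm M * frobNorm N := by
  have h0 : (M * N).trace = ∑ p : Fin d × Fin d, M p.1 p.2 * N p.2 p.1 := by
    rw [Fintype.sum_prod_type]
    simp [Matrix.trace, Matrix.diag, mul_apply]
  have h1 : |((M * N).trace).re| ≤ ∑ p : Fin d × Fin d,
      ‖M p.1 p.2‖ * ‖N p.2 p.1‖ := by
    calc |((M * N).trace).re| ≤ ‖(M * N).trace‖ := Complex.abs_re_le_norm _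
      _ ≤ ∑ p : Fin d × Fin d, ‖M p.1 p.2 * N p.2 p.1‖ := by
          rw [h0]; exact norm_sum_le _ _
      _ = _ := by simp [norm_mul]
  refine h1.trans ?_
  have h2 := Finset.sum_mul_sq_le_sq_mul_sq Finset.univ
    (fun p : Fin d × Fin d => ‖M p.1 p.2‖)
    (fun p : Fin d × Fin d => ‖N p.2 p.1‖)
  have hM : ∑ p : Fin d × Fin d, ‖M p.1 p.2‖ ^ 2 = frobNorm M ^ 2 := by
    rw [frob_sq, Fintype.sum_prod_type]
  have hN : ∑ p : Fin d × Fin d, ‖N p.2 p.1‖ ^ 2 = frobNorm N ^ 2 := by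
    rw [frob_sq, Fintype.sum_prod_type, Finset.sum_comm]
  rw [hM, hN] at h2
  have h3 : (0:ℝ) ≤ ∑ p : Fin d × Fin d, ‖M p.1 p.2‖ * ‖N p.2 p.1‖ := by
    positivity
  rw [← mul_pow] at h2
  exact (pow_le_pow_iff_left₀ h3 (mul_nonneg (frob_nonneg M) (frob_nonneg N)) two_ne_zero).mp h2

noncomputable def toE (A : Matrix (Fin d) (Fin d) ℂ) : EuclideanSpace ℂ (Fin d × Fin d) :=
  (WithLp.equiv 2 _).symm fun p => A p.1 p.2

lemma frob_eq_norm (A : Matrix (Fin d) (Fin d) ℂ) : frobNorm A = ‖toE A‖ := by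
  rw [frobNorm, EuclideanSpace.norm_eq, Fintype.sum_prod_type]
  simp [toE]

lemma frob_add_le (A B : Matrix (Fin d) (Fin d) ℂ) :
    frobNorm (A + B) ≤ frobNorm A + frobNorm B := by
  rw [frob_eq_norm, frob_eq_norm, frob_eq_norm]
  exact norm_add_le (toE A) (toE B)

lemma conj_herm {S : Matrix (Fin d) (Fin d) ℂ} (hSherm : S.IsHermitian)
    (W : Matrix (Fin d) (Fin d) ℂ) : (W * S * star W)ᴴ = W * S * star W := by
  simp [conjTranspose_mul, Matrix.star_eq_conjTranspose, hSherm.eq, mul_assoc]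

/-- `W S W*` is an l²-contraction whenever `S` is and `W` is unitary. -/
lemma conj_contract {S : Matrix (Fin d) (Fin d) ℂ}
    (hSop : ∀ v, l2Norm (S *ᵥ v) ≤ l2Norm v)
    {W : Matrix (Fin d) (Fin d) ℂ} (hW : W ∈ Matrix.unitaryGroup (Fin d) ℂ)
    (v : Fin d → ℂ) : l2Norm ((W * S * star W) *ᵥ v) ≤ l2Norm v := by
  have hWs : star W ∈ Matrix.unitaryGroup (Fin d) ℂ := Unitary.star_mem hW
  rw [← Matrix.mulVec_mulVec, ← Matrix.mulVec_mulVec, l2_mulVec_unitary hW]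
  exact (hSop _).trans_eq (l2_mulVec_unitary hWs v)

/-- `‖W S W* − W' S W'*‖₂ ≤ 2 ‖W − W'‖₂` for unitaries `W, W'` and contraction `S`. -/
lemma conj_diff_frob {S : Matrix (Fin d) (Fin d) ℂ} (hSherm : S.IsHermitian)
    (hSop : ∀ v, l2Norm (S *ᵥ v) ≤ l2Norm v)
    {W W' : Matrix (Fin d) (Fin d) ℂ}
    (hW : W ∈ Matrix.unitaryGroup (Fin d) ℂ) (hW' : W' ∈ Matrix.unitaryGroup (Fin d) ℂ) :
    frobNorm (W * S * star W - W' * S * star W') ≤ 2 * frobNorm (W - W') := by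
  have hdec : W * S * star W - W' * S * star W'
      = (W - W') * S * star W + W' * S * star (W - W') := by
    rw [star_sub]; noncomm_ring
  have hWc : ∀ v, l2Norm ((star W)ᴴ *ᵥ v) ≤ l2Norm v := by
    intro v
    rw [Matrix.star_eq_conjTranspose, conjTranspose_conjTranspose]
    exact (l2_mulVec_unitary hW v).le
  have hSc : ∀ v, l2Norm (Sᴴ *ᵥ v) ≤ l2Norm v := by
    intro v; rw [hSherm.eq]; exact hSop v
  have h1 : frobNorm ((W - W') * S * star W) ≤ frobNorm (W - W') :=
    ((frob_mul_le_right _ _ hWc).trans (frob_mul_le_right _ _ hSc))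
  have h2 : frobNorm (W' * S * star (W - W')) ≤ frobNorm (W - W') := by
    rw [mul_assoc]
    refine (frob_mul_le_left _ _ fun v => (l2_mulVec_unitary hW' v).le).trans ?_
    refine (frob_mul_le_left _ _ hSop).trans ?_
    rw [Matrix.star_eq_conjTranspose, frob_conjTranspose]
  calc frobNorm (W * S * star W - W' * S * star W')
      = frobNorm ((W - W') * S * star W + W' * S * star (W - W')) := by rw [hdec]
    _ ≤ frobNorm ((W - W') * S * star W) + frobNorm (W' * S * star (W - W')) :=
        frob_add_le _ _
    _ ≤ 2 * frobNorm (W - W') := by linarith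

end TLipAux

open TLipAux in
/-- With `σ ≻ 0`, `‖σ⁻¹‖₂ = 1`, `Σ` Hermitian with operator norm at most 1,
the function `f(U,V) = Re tr(σ⁻¹ · UΣU† · VΣV†)` satisfies
`|f(U,V) − f(U',V)| ≤ 2‖U−U'‖₂`, and is 4-Lipschitz in the L₂-sum of
Hilbert–Schmidt metrics. -/
theorem trace_conj_two_var_lipschitz {d : ℕ}
    (σ : Matrix (Fin d) (Fin d) ℂ) (hσ : σ.PosDef) (hσinv : frobNorm σ⁻¹ = 1)
    (S : Matrix (Fin d) (Fin d) ℂ) (hSherm : S.IsHermitian)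
    (hSop : ∀ v : Fin d → ℂ, l2Norm (S.mulVec v) ≤ l2Norm v)
    (U U' V V' : Matrix (Fin d) (Fin d) ℂ)
    (hU : U ∈ Matrix.unitaryGroup (Fin d) ℂ) (hU' : U' ∈ Matrix.unitaryGroup (Fin d) ℂ)
    (hV : V ∈ Matrix.unitaryGroup (Fin d) ℂ) (hV' : V' ∈ Matrix.unitaryGroup (Fin d) ℂ) :
    |((σ⁻¹ * (U * S * star U) * (V * S * star V)).trace).re
        - ((σ⁻¹ * (U' * S * star U') * (V * S * star V)).trace).re|
      ≤ 2 * frobNorm (U - U')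
    ∧ |((σ⁻¹ * (U * S * star U) * (V * S * star V)).trace).re
        - ((σ⁻¹ * (U' * S * star U') * (V' * S * star V')).trace).re|
      ≤ 4 * Real.sqrt (frobNorm (U - U') ^ 2 + frobNorm (V - V') ^ 2) := by
  set a := frobNorm (U - U') with ha
  set b := frobNorm (V - V') with hb
  -- the `U`-difference bound, with `V` arbitrary
  have keyU : ∀ W : Matrix (Fin d) (Fin d) ℂ, W ∈ Matrix.unitaryGroup (Fin d) ℂ →
      |((σ⁻¹ * (U * S * star U) * (W * S * star W)).trace).re
        - ((σ⁻¹ * (U' * S * star U') * (W * S * star W)).trace).re| ≤ 2 * a := by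
    intro W hW
    have e1 : ((σ⁻¹ * (U * S * star U) * (W * S * star W)).trace).re
        - ((σ⁻¹ * (U' * S * star U') * (W * S * star W)).trace).re
        = ((σ⁻¹ * (((U * S * star U) - (U' * S * star U')) * (W * S * star W))).trace).re := by
      rw [← Complex.sub_re, ← Matrix.trace_sub]
      congr 1
      noncomm_ring
    rw [e1]
    have hBc : ∀ v, l2Norm ((W * S * star W)ᴴ *ᵥ v) ≤ l2Norm v := by
      intro v; rw [conj_herm hSherm]; exact conj_contract hSop hW v
    calc |((σ⁻¹ * (((U * S * star U) - (U' * S * star U')) * (W * S * star W))).trace).re|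
        ≤ frobNorm σ⁻¹ * frobNorm (((U * S * star U) - (U' * S * star U')) * (W * S * star W)) :=
          abs_trace_re_le _ _
      _ = frobNorm (((U * S * star U) - (U' * S * star U')) * (W * S * star W)) := by
          rw [hσinv, one_mul]
      _ ≤ frobNorm ((U * S * star U) - (U' * S * star U')) := frob_mul_le_right _ _ hBc
      _ ≤ 2 * a := conj_diff_frob hSherm hSop hU hU'
  have part1 := keyU V hV
  refine ⟨part1, ?_⟩
  -- the `V`-difference bound, with first slot `U'`
  have keyV : |((σ⁻¹ * (U' * S * star U') * (V * S * star V)).trace).re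
      - ((σ⁻¹ * (U' * S * star U') * (V' * S * star V')).trace).re| ≤ 2 * b := by
    have e2 : ((σ⁻¹ * (U' * S * star U') * (V * S * star V)).trace).re
        - ((σ⁻¹ * (U' * S * star U') * (V' * S * star V')).trace).re
        = (((σ⁻¹ * (U' * S * star U')) * ((V * S * star V) - (V' * S * star V'))).trace).re := by
      rw [← Complex.sub_re, ← Matrix.trace_sub]
      congr 1
      noncomm_ring
    rw [e2]
    have hA'c : ∀ v, l2Norm ((U' * S * star U')ᴴ *ᵥ v) ≤ l2Norm v := by
      intro v; rw [conj_herm hSherm]; exact conj_contract hSop hU' v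
    calc |(((σ⁻¹ * (U' * S * star U')) * ((V * S * star V) - (V' * S * star V'))).trace).re|
        ≤ frobNorm (σ⁻¹ * (U' * S * star U'))
            * frobNorm ((V * S * star V) - (V' * S * star V')) := abs_trace_re_le _ _
      _ ≤ frobNorm σ⁻¹ * frobNorm ((V * S * star V) - (V' * S * star V')) := by
          have := frob_mul_le_right σ⁻¹ (U' * S * star U') hA'c
          exact mul_le_mul_of_nonneg_right this (frob_nonneg _)
      _ = frobNorm ((V * S * star V) - (V' * S * star V')) := by rw [hσinv, one_mul]
      _ ≤ 2 * b := conj_diff_frob hSherm hSop hV hV'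
  -- combine
  have ha0 : 0 ≤ a := frob_nonneg _
  have hb0 : 0 ≤ b := frob_nonneg _
  have hsa : a ≤ Real.sqrt (a ^ 2 + b ^ 2) :=
    (Real.sqrt_sq ha0).symm.trans_le (Real.sqrt_le_sqrt (by nlinarith))
  have hsb : b ≤ Real.sqrt (a ^ 2 + b ^ 2) :=
    (Real.sqrt_sq hb0).symm.trans_le (Real.sqrt_le_sqrt (by nlinarith))
  calc |((σ⁻¹ * (U * S * star U) * (V * S * star V)).trace).re
        - ((σ⁻¹ * (U' * S * star U') * (V' * S * star V')).trace).re|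
      ≤ |((σ⁻¹ * (U * S * star U) * (V * S * star V)).trace).re
          - ((σ⁻¹ * (U' * S * star U') * (V * S * star V)).trace).re|
        + |((σ⁻¹ * (U' * S * star U') * (V * S * star V)).trace).re
          - ((σ⁻¹ * (U' * S * star U') * (V' * S * star V')).trace).re| := abs_sub_le _ _ _
    _ ≤ 2 * a + 2 * b := add_le_add part1 keyV
    _ ≤ 4 * Real.sqrt (a ^ 2 + b ^ 2) := by linarith
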